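/- arXiv:1605.07411 — 2 statements merged into one kernel-verified Lean document; each statement's English description precedes it below -/
import Mathlib

section
/- Let D be an oriented graph with no induced TT3 and no induced P⁺(2,1). Every induced cycle of odd length at least 5 in D is a directed cycle. -/
/-- The underlying simple graph of a digraph given by its arc relation. -/
def underlying {V : Type*} (A : V → V → Prop) : SimpleGraph V where
  Adj x y := x ≠ y ∧ (A x y ∨ A y x)
  symm := ⟨by intro x y h; exact ⟨h.1.symm, h.2.symm⟩⟩
  loopless := ⟨by intro x h; exact h.1 rfl⟩

theorem stmt12 {V : Type*} [Fintype V] (A : V → V → Prop)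
    (hasym : ∀ x y, A x y → ¬ A y x)
    (hTT3 : ¬ ∃ u v w : V, A u v ∧ A v w ∧ A u w)
    (hP21 : ¬ ∃ a b c d : V, A a b ∧ A b c ∧ A d c ∧
      ¬ (underlying A).Adj a c ∧ ¬ (underlying A).Adj a d ∧
      ¬ (underlying A).Adj b d)
    (n : ℕ) (hn5 : 5 ≤ n) (hodd : Odd n) (v : ZMod n → V)
    (hinj : Function.Injective v)
    (hcyc : ∀ i : ZMod n, (underlying A).Adj (v i) (v (i + 1)))
    (hind : ∀ i j : ZMod n, j ≠ i + 1 → i ≠ j + 1 → i ≠ j →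
      ¬ (underlying A).Adj (v i) (v j)) :
    (∀ i : ZMod n, A (v i) (v (i + 1))) ∨
    (∀ i : ZMod n, A (v (i + 1)) (v i)) := by
  haveI : NeZero n := ⟨by omega⟩
  have hnc : ∀ k : ℕ, 0 < k → k < n → ((k : ℕ) : ZMod n) ≠ 0 := by
    intro k h1 h2 h
    rw [ZMod.natCast_eq_zero_iff] at h
    exact absurd (Nat.le_of_dvd h1 h) (by omega)
  have t1 : (1 : ZMod n) ≠ 0 := by
    have := hnc 1 (by omega) (by omega); simpa using this
  have t2 : (2 : ZMod n) ≠ 0 := by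
    have := hnc 2 (by omega) (by omega); simpa using this
  have t3 : (3 : ZMod n) ≠ 0 := by
    have := hnc 3 (by omega) (by omega); simpa using this
  have t4 : (4 : ZMod n) ≠ 0 := by
    have := hnc 4 (by omega) (by omega); simpa using this
  -- the step lemma
  have step : ∀ i : ZMod n, A (v i) (v (i + 1)) → A (v (i + 2)) (v (i + 2 + 1)) := by
    intro i hF
    by_contra hB'
    rw [show i + 2 + 1 = i + 3 from by ring] at hB'
    have hB : A (v (i + 3)) (v (i + 2)) := by
      have := (hcyc (i + 2)).2
      rw [show i + 2 + 1 = i + 3 from by ring] at this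
      tauto
    rcases (hcyc (i + 1)).2 with c1 | c1
    · rw [show i + 1 + 1 = i + 2 by ring] at c1
      refine hP21 ⟨v i, v (i + 1), v (i + 2), v (i + 3), hF, c1, hB, ?_, ?_, ?_⟩
      · exact hind i (i + 2) (fun h => t1 (by linear_combination h))
          (fun h => t3 (by linear_combination -h)) (fun h => t2 (by linear_combination -h))
      · exact hind i (i + 3) (fun h => t2 (by linear_combination h))
          (fun h => t4 (by linear_combination -h)) (fun h => t3 (by linear_combination -h))
      · exact hind (i + 1) (i + 3) (fun h => t1 (by linear_combination h))
          (fun h => t3 (by linear_combination -h)) (fun h => t2 (by linear_combination -h))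
    · rw [show i + 1 + 1 = i + 2 by ring] at c1
      refine hP21 ⟨v (i + 3), v (i + 2), v (i + 1), v i, hB, c1, hF, ?_, ?_, ?_⟩
      · exact hind (i + 3) (i + 1) (fun h => t3 (by linear_combination -h))
          (fun h => t1 (by linear_combination h)) (fun h => t2 (by linear_combination h))
      · exact hind (i + 3) i (fun h => t4 (by linear_combination -h))
          (fun h => t2 (by linear_combination h)) (fun h => t3 (by linear_combination h))
      · exact hind (i + 2) i (fun h => t3 (by linear_combination -h))
          (fun h => t1 (by linear_combination h)) (fun h => t2 (by linear_combination h))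
  -- propagation
  have prop : ∀ (k : ℕ) (i : ZMod n), A (v i) (v (i + 1)) →
      A (v (i + 2 * k)) (v (i + 2 * k + 1)) := by
    intro k
    induction k with
    | zero => intro i h; simpa using h
    | succ k ih =>
      intro i h
      have h2 := step (i + 2 * (k : ZMod n)) (ih i h)
      have e : i + 2 * (((k : ℕ) + 1 : ℕ) : ZMod n) = i + 2 * (k : ZMod n) + 2 := by
        push_cast; ring
      rw [e, show i + 2 * (k : ZMod n) + 2 + 1 = i + 2 * (k : ZMod n) + 2 + 1 from rfl]
      exact h2
  have all : (∃ i : ZMod n, A (v i) (v (i + 1))) → ∀ j : ZMod n, A (v j) (v (j + 1)) := by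
    rintro ⟨i, hi⟩ j
    obtain ⟨t, ht⟩ := hodd
    set m : ℕ := (j - i).val with hm
    have := prop (m * (t + 1)) i hi
    have hmm : ((m : ℕ) : ZMod n) = j - i := by
      rw [hm]; simp [ZMod.natCast_val, ZMod.cast_id]
    have key : i + 2 * ((m * (t + 1) : ℕ) : ZMod n) = j := by
      have h1 : (2 : ZMod n) * ((m * (t + 1) : ℕ) : ZMod n) = ((m * (n + 1) : ℕ) : ZMod n) := by
        rw [show (2 : ZMod n) = ((2 : ℕ) : ZMod n) from by push_cast; ring, ← Nat.cast_mul]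
        congr 1
        rw [ht]; ring
      rw [mul_comm (2 : ZMod n), ← mul_comm (2 : ZMod n), h1]
      push_cast [ZMod.natCast_self, hmm]
      ring
    rw [key] at this
    exact this
  by_cases h0 : A (v 0) (v (0 + 1))
  · exact Or.inl fun i => all ⟨0, h0⟩ i
  · refine Or.inr fun i => ?_
    rcases (hcyc i).2 with h | h
    · exact absurd (all ⟨i, h⟩ 0) h0
    · exact h
end

section
/- An oriented graph with no induced P⁺(3) and no induced P⁺(2,1) contains no odd hole (no induced cycle of odd length at least 5 in its underlying graph). -/
theorem stmt17 {V : Type*} [Fintype V] (A : V → V → Prop)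
    (hasym : ∀ x y, A x y → ¬ A y x)
    (hP3 : ¬ ∃ a b c d : V, A a b ∧ A b c ∧ A c d ∧
      ¬ (underlying A).Adj a c ∧ ¬ (underlying A).Adj a d ∧
      ¬ (underlying A).Adj b d)
    (hP21 : ¬ ∃ a b c d : V, A a b ∧ A b c ∧ A d c ∧
      ¬ (underlying A).Adj a c ∧ ¬ (underlying A).Adj a d ∧
      ¬ (underlying A).Adj b d) :
    ¬ ∃ (n : ℕ) (v : ZMod n → V), 5 ≤ n ∧ Odd n ∧
      Function.Injective v ∧
      (∀ i : ZMod n, (underlying A).Adj (v i) (v (i + 1))) ∧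
      (∀ i j : ZMod n, j ≠ i + 1 → i ≠ j + 1 → i ≠ j →
        ¬ (underlying A).Adj (v i) (v j)) := by
  rintro ⟨n, v, hn5, hodd, hinj, hadj, hind⟩
  haveI : NeZero n := ⟨by omega⟩
  have hne : ∀ k : ℕ, 0 < k → k < n → ((k : ZMod n) ≠ 0) := by
    intro k hk1 hk2 h
    rw [ZMod.natCast_eq_zero_iff] at h
    exact absurd (Nat.le_of_dvd hk1 h) (by omega)
  have h1 : (1 : ZMod n) ≠ 0 := by simpa using hne 1 (by omega) (by omega)
  have h2 : (2 : ZMod n) ≠ 0 := by simpa using hne 2 (by omega) (by omega)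
  have h3 : (3 : ZMod n) ≠ 0 := by simpa using hne 3 (by omega) (by omega)
  have h4 : (4 : ZMod n) ≠ 0 := by simpa using hne 4 (by omega) (by omega)
  -- no two consecutive arcs in the forward direction
  have hfwd : ∀ i : ZMod n, ¬ (A (v i) (v (i+1)) ∧ A (v (i+1)) (v (i+2))) := by
    rintro i ⟨hab, hbc⟩
    have hac : ¬ (underlying A).Adj (v i) (v (i+2)) :=
      hind i (i+2) (fun h => h1 (by linear_combination h))
        (fun h => h3 (by linear_combination -h)) (fun h => h2 (by linear_combination -h))
    have had : ¬ (underlying A).Adj (v i) (v (i+3)) :=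
      hind i (i+3) (fun h => h2 (by linear_combination h))
        (fun h => h4 (by linear_combination -h)) (fun h => h3 (by linear_combination -h))
    have hbd : ¬ (underlying A).Adj (v (i+1)) (v (i+3)) :=
      hind (i+1) (i+3) (fun h => h1 (by linear_combination h))
        (fun h => h3 (by linear_combination -h)) (fun h => h2 (by linear_combination -h))
    have hcd := hadj (i+2)
    rw [show i+2+1 = i+3 from by ring] at hcd
    rcases hcd.2 with h | h
    · exact hP3 ⟨v i, v (i+1), v (i+2), v (i+3), hab, hbc, h, hac, had, hbd⟩
    · exact hP21 ⟨v i, v (i+1), v (i+2), v (i+3), hab, hbc, h, hac, had, hbd⟩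
  -- no two consecutive arcs in the backward direction
  have hbwd : ∀ i : ZMod n, ¬ (A (v (i+1)) (v i) ∧ A (v (i+2)) (v (i+1))) := by
    rintro i ⟨hbc, hab⟩
    have hac : ¬ (underlying A).Adj (v (i+2)) (v i) :=
      hind (i+2) i (fun h => h3 (by linear_combination -h))
        (fun h => h1 (by linear_combination h)) (fun h => h2 (by linear_combination h))
    have had : ¬ (underlying A).Adj (v (i+2)) (v (i-1)) :=
      hind (i+2) (i-1) (fun h => h4 (by linear_combination -h))
        (fun h => h2 (by linear_combination h)) (fun h => h3 (by linear_combination h))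
    have hbd : ¬ (underlying A).Adj (v (i+1)) (v (i-1)) :=
      hind (i+1) (i-1) (fun h => h3 (by linear_combination -h))
        (fun h => h1 (by linear_combination h)) (fun h => h2 (by linear_combination h))
    have hcd := hadj (i-1)
    rw [show i-1+1 = i from by ring] at hcd
    rcases hcd.2 with h | h
    · exact hP21 ⟨v (i+2), v (i+1), v i, v (i-1), hab, hbc, h, hac, had, hbd⟩
    · exact hP3 ⟨v (i+2), v (i+1), v i, v (i-1), hab, hbc, h, hac, had, hbd⟩
  set P : ZMod n → Prop := fun i => A (v i) (v (i+1)) with hP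
  have hstep : ∀ i : ZMod n, P (i+1) ↔ ¬ P i := by
    intro i
    simp only [hP]
    rw [show i+1+1 = i+2 from by ring]
    constructor
    · intro hb ha; exact hfwd i ⟨ha, hb⟩
    · intro ha
      rcases (hadj (i+1)).2 with h | h
      · rwa [show i+1+1 = i+2 from by ring] at h
      · rw [show i+1+1 = i+2 from by ring] at h
        rcases (hadj i).2 with h' | h'
        · exact absurd h' ha
        · exact absurd ⟨h', h⟩ (hbwd i)
  have key : ∀ k : ℕ, (Even k → (P (k : ZMod n) ↔ P 0)) ∧
      (Odd k → (P (k : ZMod n) ↔ ¬ P 0)) := by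
    intro k
    induction k with
    | zero => exact ⟨fun _ => by norm_num, fun h => by simp [Nat.odd_iff] at h⟩
    | succ k ih =>
      have hc : ((k+1 : ℕ) : ZMod n) = (k : ZMod n) + 1 := by push_cast; ring
      constructor
      · intro he
        have hk : Odd k := by
          rcases Nat.even_or_odd k with h | h
          · rw [Nat.even_iff] at h he; omega
          · exact h
        have h' := ih.2 hk
        rw [hc, hstep]
        tauto
      · intro ho
        have hk : Even k := by
          rcases Nat.even_or_odd k with h | h
          · exact h
          · exact absurd ho (by simp [Nat.odd_iff, Nat.even_iff] at h ⊢; omega)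
        have h' := ih.1 hk
        rw [hc, hstep]
        tauto
  have hfin := (key n).2 hodd
  rw [ZMod.natCast_self] at hfin
  tauto
end
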